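/- arXiv:1010.1220 — 4 statements merged into one kernel-verified Lean document; each statement's English description precedes it below -/
import Mathlib

section
/- Let G be an undirected graph on vertex set {1,…,n} with positive vertex weights c_i and edge parameters J_ij. If J_ij ≥ min{c_i, c_j} for every edge ij of G, then the maximum of Y(x) = Σ_{i∈V(G)} c_i x_i − Σ_{ij∈E(G)} J_ij x_i x_j over all x ∈ {0,1}^n equals the maximum total weight Σ_{i∈S} c_i over all independent sets S of G. -/
open Finset

/-- The set of (ordered, increasing) edge pairs of `G`. -/
def edgePairs {n : ℕ} (G : SimpleGraph (Fin n)) [DecidableRel G.Adj] :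
    Finset (Fin n × Fin n) :=
  Finset.univ.filter (fun p => p.1 < p.2 ∧ G.Adj p.1 p.2)

/-- The pseudo-boolean function `Y(x) = Σ_i c_i x_i − Σ_{ij∈E} J_ij x_i x_j`. -/
def Y {n : ℕ} (G : SimpleGraph (Fin n)) [DecidableRel G.Adj]
    (c : Fin n → ℝ) (J : Fin n → Fin n → ℝ) (x : Fin n → ℝ) : ℝ :=
  (∑ i, c i * x i) - ∑ p ∈ edgePairs G, J p.1 p.2 * x p.1 * x p.2

/-- `S` is an independent set of `G`. -/
def IsIndep {n : ℕ} (G : SimpleGraph (Fin n)) (S : Finset (Fin n)) : Prop :=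
  ∀ i ∈ S, ∀ j ∈ S, ¬ G.Adj i j

def innerEdges {n : ℕ} (G : SimpleGraph (Fin n)) [DecidableRel G.Adj]
    (T : Finset (Fin n)) : Finset (Fin n × Fin n) :=
  (edgePairs G).filter (fun p => p.1 ∈ T ∧ p.2 ∈ T)

def W {n : ℕ} (G : SimpleGraph (Fin n)) [DecidableRel G.Adj]
    (c : Fin n → ℝ) (J : Fin n → Fin n → ℝ) (T : Finset (Fin n)) : ℝ :=
  (∑ i ∈ T, c i) - ∑ p ∈ innerEdges G T, J p.1 p.2

lemma innerEdges_empty {n : ℕ} (G : SimpleGraph (Fin n)) [DecidableRel G.Adj]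
    {T : Finset (Fin n)} (hT : IsIndep G T) : innerEdges G T = ∅ := by
  ext p
  simp only [innerEdges, edgePairs, mem_filter, mem_univ, true_and, notMem_empty, iff_false]
  rintro ⟨⟨-, hadj⟩, h1, h2⟩
  exact hT _ h1 _ h2 hadj

lemma W_indep {n : ℕ} (G : SimpleGraph (Fin n)) [DecidableRel G.Adj]
    (c : Fin n → ℝ) (J : Fin n → Fin n → ℝ)
    {T : Finset (Fin n)} (hT : IsIndep G T) : W G c J T = ∑ i ∈ T, c i := by
  simp [W, innerEdges_empty G hT]

lemma W_step {n : ℕ} (G : SimpleGraph (Fin n)) [DecidableRel G.Adj]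
    (c : Fin n → ℝ) (J : Fin n → Fin n → ℝ)
    (hc : ∀ i, 0 < c i)
    (hJsymm : ∀ i j, J i j = J j i)
    (hJ : ∀ i j, G.Adj i j → min (c i) (c j) ≤ J i j)
    {T : Finset (Fin n)} {i j : Fin n} (hi : i ∈ T) (hj : j ∈ T)
    (hadj : G.Adj i j) (hcij : c i ≤ c j) :
    W G c J T ≤ W G c J (T.erase i) := by
  have hne : i ≠ j := G.ne_of_adj hadj
  set q : Fin n × Fin n := if i < j then (i, j) else (j, i) with hq
  have hsub : innerEdges G (T.erase i) ⊆ innerEdges G T := by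
    intro p hp
    simp only [innerEdges, mem_filter] at hp ⊢
    exact ⟨hp.1, mem_of_mem_erase hp.2.1, mem_of_mem_erase hp.2.2⟩
  have hqmem : q ∈ innerEdges G T := by
    rcases lt_or_gt_of_ne hne with h | h
    · simp only [hq, if_pos h, innerEdges, edgePairs, mem_filter, mem_univ, true_and]
      exact ⟨⟨h, hadj⟩, hi, hj⟩
    · simp only [hq, if_neg (not_lt.mpr h.le), innerEdges, edgePairs, mem_filter, mem_univ,
        true_and]
      exact ⟨⟨h, hadj.symm⟩, hj, hi⟩
  have hqnot : q ∉ innerEdges G (T.erase i) := by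
    intro hmem
    simp only [innerEdges, mem_filter] at hmem
    rcases lt_or_gt_of_ne hne with h | h
    · rw [hq, if_pos h] at hmem
      exact (notMem_erase i T) hmem.2.1
    · rw [hq, if_neg (not_lt.mpr h.le)] at hmem
      exact (notMem_erase i T) hmem.2.2
  have hqmem' : q ∈ innerEdges G T \ innerEdges G (T.erase i) :=
    mem_sdiff.mpr ⟨hqmem, hqnot⟩
  have hJq : c i ≤ J q.1 q.2 := by
    rcases lt_or_gt_of_ne hne with h | h
    · rw [hq, if_pos h]
      calc c i = min (c i) (c j) := (min_eq_left hcij).symm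
        _ ≤ J i j := hJ i j hadj
    · rw [hq, if_neg (not_lt.mpr h.le)]
      calc c i = min (c j) (c i) := (min_eq_right hcij).symm
        _ ≤ J j i := hJ j i hadj.symm
  have hnonneg : ∀ p ∈ innerEdges G T \ innerEdges G (T.erase i), 0 ≤ J p.1 p.2 := by
    intro p hp
    have hp' : p ∈ innerEdges G T := (mem_sdiff.mp hp).1
    simp only [innerEdges, edgePairs, mem_filter, mem_univ, true_and] at hp'
    have := hJ p.1 p.2 hp'.1.2
    have h1 := hc p.1
    have h2 := hc p.2
    have : min (c p.1) (c p.2) ≤ J p.1 p.2 := this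
    exact le_trans (le_min h1.le h2.le) this
  have hsum : c i ≤ ∑ p ∈ innerEdges G T \ innerEdges G (T.erase i), J p.1 p.2 :=
    le_trans hJq (Finset.single_le_sum hnonneg hqmem')
  have hsplit : ∑ p ∈ innerEdges G (T.erase i), J p.1 p.2
      + ∑ p ∈ innerEdges G T \ innerEdges G (T.erase i), J p.1 p.2
      = ∑ p ∈ innerEdges G T, J p.1 p.2 := by
    rw [add_comm]
    exact Finset.sum_sdiff hsub
  have hcs : ∑ x ∈ T.erase i, c x = (∑ x ∈ T, c x) - c i :=
    Finset.sum_erase_eq_sub hi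
  unfold W
  rw [hcs]
  linarith
lemma key {n : ℕ} (G : SimpleGraph (Fin n)) [DecidableRel G.Adj]
    (c : Fin n → ℝ) (J : Fin n → Fin n → ℝ)
    (hc : ∀ i, 0 < c i)
    (hJsymm : ∀ i j, J i j = J j i)
    (hJ : ∀ i j, G.Adj i j → min (c i) (c j) ≤ J i j)
    (T : Finset (Fin n)) :
    ∃ S : Finset (Fin n), IsIndep G S ∧ W G c J T ≤ ∑ i ∈ S, c i := by
  induction T using Finset.strongInduction with
  | _ T ih =>
    by_cases hT : IsIndep G T
    · exact ⟨T, hT, (W_indep G c J hT).le⟩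
    · simp only [IsIndep, not_forall] at hT
      obtain ⟨i, hi, j, hj, hadj⟩ := hT
      rw [not_not] at hadj
      rcases le_total (c i) (c j) with h | h
      · obtain ⟨S, hS, hle⟩ := ih (T.erase i) (Finset.erase_ssubset hi)
        exact ⟨S, hS, le_trans (W_step G c J hc hJsymm hJ hi hj hadj h) hle⟩
      · obtain ⟨S, hS, hle⟩ := ih (T.erase j) (Finset.erase_ssubset hj)
        exact ⟨S, hS, le_trans (W_step G c J hc hJsymm hJ hj hi hadj.symm h) hle⟩

lemma Y_eq_W {n : ℕ} (G : SimpleGraph (Fin n)) [DecidableRel G.Adj]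
    (c : Fin n → ℝ) (J : Fin n → Fin n → ℝ)
    (x : Fin n → ℝ) (hx : ∀ i, x i = 0 ∨ x i = 1) :
    Y G c J x = W G c J (Finset.univ.filter (fun i => x i = 1)) := by
  unfold Y W
  congr 1
  · rw [Finset.sum_filter]
    refine Finset.sum_congr rfl fun i _ => ?_
    rcases hx i with h | h <;> simp [h]
  · unfold innerEdges
    rw [Finset.sum_filter]
    refine Finset.sum_congr rfl fun p _ => ?_
    rcases hx p.1 with h1 | h1 <;> rcases hx p.2 with h2 | h2 <;> simp [h1, h2]

theorem stmt0 {n : ℕ} (G : SimpleGraph (Fin n)) [DecidableRel G.Adj]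
    (c : Fin n → ℝ) (J : Fin n → Fin n → ℝ)
    (hc : ∀ i, 0 < c i)
    (hJsymm : ∀ i j, J i j = J j i)
    (hJ : ∀ i j, G.Adj i j → min (c i) (c j) ≤ J i j) :
    sSup {y : ℝ | ∃ x : Fin n → ℝ, (∀ i, x i = 0 ∨ x i = 1) ∧ y = Y G c J x} =
      sSup {w : ℝ | ∃ S : Finset (Fin n), IsIndep G S ∧ w = ∑ i ∈ S, c i} := by
  set A := {y : ℝ | ∃ x : Fin n → ℝ, (∀ i, x i = 0 ∨ x i = 1) ∧ y = Y G c J x} with hA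
  set B := {w : ℝ | ∃ S : Finset (Fin n), IsIndep G S ∧ w = ∑ i ∈ S, c i} with hB
  have hBA : B ⊆ A := by
    rintro w ⟨S, hS, rfl⟩
    refine ⟨fun i => if i ∈ S then (1 : ℝ) else 0, fun i => ?_, ?_⟩
    · by_cases h : i ∈ S <;> simp [h]
    · rw [Y_eq_W G c J _ (fun i => by by_cases h : i ∈ S <;> simp [h])]
      have hfil : (Finset.univ.filter (fun i => (if i ∈ S then (1:ℝ) else 0) = 1)) = S := by
        ext i
        by_cases h : i ∈ S <;> simp [h]
      rw [hfil, W_indep G c J hS]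
  have hdom : ∀ a ∈ A, ∃ b ∈ B, a ≤ b := by
    rintro a ⟨x, hx, rfl⟩
    obtain ⟨S, hS, hle⟩ := key G c J hc hJsymm hJ (Finset.univ.filter (fun i => x i = 1))
    exact ⟨∑ i ∈ S, c i, ⟨S, hS, rfl⟩, by rw [Y_eq_W G c J x hx]; exact hle⟩
  have hBfin : B.Finite := by
    have : B ⊆ Set.range (fun S : Finset (Fin n) => ∑ i ∈ S, c i) := by
      rintro w ⟨S, -, rfl⟩; exact ⟨S, rfl⟩
    exact Set.Finite.subset (Set.finite_range _) this
  have hBne : B.Nonempty := ⟨0, ∅, by simp [IsIndep], by simp⟩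
  have hAne : A.Nonempty := hBne.mono hBA
  have hBbdd : BddAbove B := hBfin.bddAbove
  have hAbdd : BddAbove A := by
    refine ⟨sSup B, fun a ha => ?_⟩
    obtain ⟨b, hb, hab⟩ := hdom a ha
    exact le_trans hab (le_csSup hBbdd hb)
  apply le_antisymm
  · refine csSup_le hAne fun a ha => ?_
    obtain ⟨b, hb, hab⟩ := hdom a ha
    exact le_trans hab (le_csSup hBbdd hb)
  · exact csSup_le hBne fun b hb => le_csSup hAbdd (hBA hb)
end

section
/- Let G be an undirected graph on vertex set {1,…,n} with positive vertex weights c_i, let J > 0 be a constant coupling, let d_i denote the degree of vertex i, and let k > 0 be a scaling factor such that kJ > min{c_i, c_j} for every edge ij. Define the scaled Ising energy E_k(s) = Σ_{i∈V(G)} (J d_i − 2 c_i / k) s_i + J Σ_{ij∈E(G)} s_i s_j for s ∈ {−1,1}^n. Then s* ∈ {−1,1}^n minimizes E_k over {−1,1}^n if and only if {i ∈ V(G) : s*_i = 1} is a maximum-weight independent set of G with respect to the (unscaled) weights c_i. In particular, the set of minimizers of E_k is the same for every such k. -/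
open Finset

/-- The scaled Ising energy
`E_k(s) = Σ_i (J d_i − 2 c_i / k) s_i + J Σ_{ij∈E} s_i s_j`. -/
noncomputable def IsingEk {n : ℕ} (G : SimpleGraph (Fin n)) [DecidableRel G.Adj]
    (c : Fin n → ℝ) (J k : ℝ) (s : Fin n → ℝ) : ℝ :=
  (∑ i, (J * (G.degree i : ℝ) - 2 * c i / k) * s i)
    + J * ∑ p ∈ edgePairs G, s p.1 * s p.2

lemma mem_edgePairs {n : ℕ} {G : SimpleGraph (Fin n)} [DecidableRel G.Adj]
    {p : Fin n × Fin n} : p ∈ edgePairs G ↔ p.1 < p.2 ∧ G.Adj p.1 p.2 := by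
  simp [edgePairs]

/-- Number of edges of `G` inside `S`. -/
def eSd {n : ℕ} (G : SimpleGraph (Fin n)) [DecidableRel G.Adj] (S : Finset (Fin n)) : ℕ :=
  ((edgePairs G).filter fun p => p.1 ∈ S ∧ p.2 ∈ S).card

/-- The set function `f(S) = weight(S) - kJ · e(S)` whose maximizers correspond to
Ising minimizers. -/
noncomputable def fval {n : ℕ} (G : SimpleGraph (Fin n)) [DecidableRel G.Adj]
    (c : Fin n → ℝ) (k J : ℝ) (S : Finset (Fin n)) : ℝ :=
  ∑ i ∈ S, c i - k * J * (eSd G S : ℝ)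

lemma degsum {n : ℕ} (G : SimpleGraph (Fin n)) [DecidableRel G.Adj] (g : Fin n → ℝ) :
    ∑ i, (G.degree i : ℝ) * g i = ∑ p ∈ edgePairs G, (g p.1 + g p.2) := by
  have h1 : ∀ i, (G.degree i : ℝ) * g i = ∑ j, if G.Adj i j then g i else 0 := by
    intro i
    rw [← Finset.sum_filter, Finset.sum_const, ← SimpleGraph.neighborFinset_eq_filter,
      nsmul_eq_mul]
    rfl
  simp_rw [h1]
  rw [show (∑ x : Fin n, ∑ j : Fin n, if G.Adj x j then g x else 0)
      = ∑ p : Fin n × Fin n, if G.Adj p.1 p.2 then g p.1 else 0 from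
    (Fintype.sum_prod_type (f := fun p : Fin n × Fin n =>
      if G.Adj p.1 p.2 then g p.1 else 0)).symm]
  have h2 : ∀ p : Fin n × Fin n, (if G.Adj p.1 p.2 then g p.1 else 0)
      = (if p.1 < p.2 ∧ G.Adj p.1 p.2 then g p.1 else 0)
        + (if p.2 < p.1 ∧ G.Adj p.1 p.2 then g p.1 else 0) := by
    intro p
    by_cases hadj : G.Adj p.1 p.2
    · rcases lt_trichotomy p.1 p.2 with h | h | h
      · simp [hadj, h, asymm h]
      · exact absurd hadj (h ▸ G.irrefl)
      · simp [hadj, h, asymm h]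
    · simp [hadj]
  simp_rw [h2]
  rw [Finset.sum_add_distrib]
  have h3 : ∑ p : Fin n × Fin n, (if p.2 < p.1 ∧ G.Adj p.1 p.2 then g p.1 else 0)
      = ∑ p : Fin n × Fin n, (if p.1 < p.2 ∧ G.Adj p.1 p.2 then g p.2 else 0) := by
    apply Fintype.sum_equiv (Equiv.prodComm (Fin n) (Fin n))
    intro p
    simp only [Equiv.prodComm_apply, Prod.fst_swap, Prod.snd_swap]
    have : (p.2 < p.1 ∧ G.Adj p.2 p.1) ↔ (p.2 < p.1 ∧ G.Adj p.1 p.2) :=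
      and_congr_right fun _ => G.adj_comm _ _
    simp only [this]
  rw [h3, edgePairs, Finset.sum_filter, ← Finset.sum_add_distrib]
  apply Finset.sum_congr rfl
  intro p _
  split <;> simp

lemma energy_eq {n : ℕ} (G : SimpleGraph (Fin n)) [DecidableRel G.Adj]
    (c : Fin n → ℝ) (J k : ℝ) (hk : k ≠ 0) (s : Fin n → ℝ)
    (hs : ∀ i, s i = -1 ∨ s i = 1) :
    IsingEk G c J k s =
      (-(J * ((edgePairs G).card : ℝ)) + (2 / k) * ∑ i, c i)
        - (4 / k) * fval G c k J (Finset.univ.filter fun i => s i = 1) := by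
  set S := Finset.univ.filter (fun i => s i = 1) with hSdef
  have e1 : ∑ i, (J * (G.degree i : ℝ) - 2 * c i / k) * s i
      = J * (∑ p ∈ edgePairs G, (s p.1 + s p.2))
        - ((4 / k) * ∑ i ∈ S, c i - (2 / k) * ∑ i, c i) := by
    have hA : ∑ i ∈ S, c i = ∑ i, if s i = 1 then c i else 0 := Finset.sum_filter _ _
    have key : ∀ i, (J * (G.degree i : ℝ) - 2 * c i / k) * s i
        = J * ((G.degree i : ℝ) * s i)
          - ((4 / k) * (if s i = 1 then c i else 0) - (2 / k) * c i) := by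
      intro i
      rcases hs i with h | h <;> rw [h]
      · rw [if_neg (by norm_num)]; field_simp; ring
      · rw [if_pos rfl]; field_simp; ring
    simp_rw [key]
    rw [Finset.sum_sub_distrib, Finset.sum_sub_distrib, ← Finset.mul_sum, ← Finset.mul_sum,
      ← Finset.mul_sum, degsum, hA]
  have e2 : ∑ p ∈ edgePairs G, s p.1 * s p.2
      = 4 * (eSd G S : ℝ) - (∑ p ∈ edgePairs G, (s p.1 + s p.2))
        - ((edgePairs G).card : ℝ) := by
    have key : ∀ p ∈ edgePairs G, s p.1 * s p.2
        = 4 * (if p.1 ∈ S ∧ p.2 ∈ S then (1 : ℝ) else 0) - (s p.1 + s p.2) - 1 := by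
      intro p _
      have m1 : p.1 ∈ S ↔ s p.1 = 1 := by simp [hSdef]
      have m2 : p.2 ∈ S ↔ s p.2 = 1 := by simp [hSdef]
      rcases hs p.1 with h1 | h1 <;> rcases hs p.2 with h2 | h2 <;>
        simp [m1, m2, h1, h2] <;> norm_num
    rw [Finset.sum_congr rfl key, Finset.sum_sub_distrib, Finset.sum_sub_distrib,
      ← Finset.mul_sum, Finset.sum_boole, Finset.sum_const, nsmul_eq_mul, mul_one]
    rfl
  rw [IsingEk, e1, e2, fval]
  field_simp
  ring

lemma eSd_indep_zero {n : ℕ} (G : SimpleGraph (Fin n)) [DecidableRel G.Adj]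
    {S : Finset (Fin n)} (h : IsIndep G S) : eSd G S = 0 := by
  rw [eSd, Finset.card_eq_zero, Finset.filter_eq_empty_iff]
  intro p hp
  rintro ⟨h1, h2⟩
  exact h p.1 h1 p.2 h2 (mem_edgePairs.mp hp).2

lemma fval_indep {n : ℕ} (G : SimpleGraph (Fin n)) [DecidableRel G.Adj]
    (c : Fin n → ℝ) (k J : ℝ) {S : Finset (Fin n)} (h : IsIndep G S) :
    fval G c k J S = ∑ i ∈ S, c i := by
  rw [fval, eSd_indep_zero G h]
  simp

lemma fval_erase {n : ℕ} (G : SimpleGraph (Fin n)) [DecidableRel G.Adj]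
    (c : Fin n → ℝ) (k J : ℝ) (hkJ : 0 ≤ k * J) {S : Finset (Fin n)} {i j : Fin n}
    (hi : i ∈ S) (hj : j ∈ S) (hadj : G.Adj i j) :
    fval G c k J S ≤ fval G c k J (S.erase i) + c i - k * J := by
  set q : Fin n × Fin n := if i < j then (i, j) else (j, i) with hq
  have hqmem : q ∈ (edgePairs G).filter (fun p => p.1 ∈ S ∧ p.2 ∈ S) := by
    rcases lt_or_gt_of_ne (G.ne_of_adj hadj) with h | h
    · rw [hq, if_pos h]
      simp only [Finset.mem_filter, mem_edgePairs]
      exact ⟨⟨h, hadj⟩, hi, hj⟩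
    · rw [hq, if_neg (asymm h)]
      simp only [Finset.mem_filter, mem_edgePairs]
      exact ⟨⟨h, hadj.symm⟩, hj, hi⟩
  have hq1 : q.1 = i ∨ q.2 = i := by
    rw [hq]; split
    · left; rfl
    · right; rfl
  have hsub : (edgePairs G).filter (fun p => p.1 ∈ S.erase i ∧ p.2 ∈ S.erase i)
      ⊆ ((edgePairs G).filter (fun p => p.1 ∈ S ∧ p.2 ∈ S)).erase q := by
    intro p hp
    simp only [Finset.mem_filter, Finset.mem_erase] at hp ⊢
    obtain ⟨hpe, ⟨h1i, h1S⟩, h2i, h2S⟩ := hp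
    refine ⟨?_, hpe, h1S, h2S⟩
    rintro rfl
    rcases hq1 with h | h
    · exact h1i h
    · exact h2i h
  have hcard : eSd G (S.erase i) + 1 ≤ eSd G S := by
    have h1 : eSd G (S.erase i)
        ≤ (((edgePairs G).filter (fun p => p.1 ∈ S ∧ p.2 ∈ S)).erase q).card :=
      Finset.card_le_card hsub
    rw [Finset.card_erase_of_mem hqmem] at h1
    have h2 : 0 < eSd G S := Finset.card_pos.mpr ⟨q, hqmem⟩
    rw [eSd, eSd] at *
    omega
  have hsum : ∑ x ∈ S, c x = ∑ x ∈ S.erase i, c x + c i :=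
    (Finset.sum_erase_add S c hi).symm
  have hcast : (eSd G (S.erase i) : ℝ) + 1 ≤ (eSd G S : ℝ) := by exact_mod_cast hcard
  have hmul := mul_le_mul_of_nonneg_left hcast hkJ
  rw [mul_add, mul_one] at hmul
  rw [fval, fval, hsum]
  linarith

lemma improve {n : ℕ} (G : SimpleGraph (Fin n)) [DecidableRel G.Adj]
    (c : Fin n → ℝ) (J k : ℝ) (hk : 0 < k) (hJ : 0 < J)
    (hcond : ∀ i j, G.Adj i j → min (c i) (c j) < k * J)
    {S : Finset (Fin n)} (h : ¬ IsIndep G S) :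
    ∃ i ∈ S, fval G c k J S < fval G c k J (S.erase i) := by
  rw [IsIndep] at h
  push_neg at h
  obtain ⟨i, hi, j, hj, hadj⟩ := h
  have hkJ : 0 ≤ k * J := le_of_lt (mul_pos hk hJ)
  rcases le_total (c i) (c j) with h | h
  · refine ⟨i, hi, ?_⟩
    have h1 := fval_erase G c k J hkJ hi hj hadj
    have h2 : c i < k * J := by
      have := hcond i j hadj; rwa [min_eq_left h] at this
    linarith
  · refine ⟨j, hj, ?_⟩
    have h1 := fval_erase G c k J hkJ hj hi hadj.symm
    have h2 : c j < k * J := by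
      have := hcond i j hadj; rwa [min_eq_right h] at this
    linarith

lemma exists_indep_ge {n : ℕ} (G : SimpleGraph (Fin n)) [DecidableRel G.Adj]
    (c : Fin n → ℝ) (J k : ℝ) (hk : 0 < k) (hJ : 0 < J)
    (hcond : ∀ i j, G.Adj i j → min (c i) (c j) < k * J)
    (S : Finset (Fin n)) :
    ∃ T, IsIndep G T ∧ fval G c k J S ≤ ∑ i ∈ T, c i := by
  induction S using Finset.strongInduction with
  | _ S ih =>
    by_cases h : IsIndep G S
    · exact ⟨S, h, le_of_eq (fval_indep G c k J h)⟩
    · obtain ⟨i, hi, hlt⟩ := improve G c J k hk hJ hcond h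
      obtain ⟨T, hT, hle⟩ := ih (S.erase i) (Finset.erase_ssubset hi)
      exact ⟨T, hT, le_trans hlt.le hle⟩

lemma main_iff {n : ℕ} (G : SimpleGraph (Fin n)) [DecidableRel G.Adj]
    (c : Fin n → ℝ) (J : ℝ) (hJ : 0 < J) (k : ℝ) (hk : 0 < k)
    (hcond : ∀ i j, G.Adj i j → min (c i) (c j) < k * J)
    (s : Fin n → ℝ) (hs : ∀ i, s i = -1 ∨ s i = 1) :
    (∀ s' : Fin n → ℝ, (∀ i, s' i = -1 ∨ s' i = 1) →
        IsingEk G c J k s ≤ IsingEk G c J k s') ↔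
      (IsIndep G (Finset.univ.filter (fun i => s i = 1)) ∧
        ∀ S : Finset (Fin n), IsIndep G S →
          ∑ i ∈ S, c i ≤ ∑ i ∈ Finset.univ.filter (fun i => s i = 1), c i) := by
  set S := Finset.univ.filter (fun i => s i = 1) with hSdef
  have hk0 : k ≠ 0 := ne_of_gt hk
  have hpos : (0 : ℝ) < 4 / k := by positivity
  have step1 : (∀ s' : Fin n → ℝ, (∀ i, s' i = -1 ∨ s' i = 1) →
        IsingEk G c J k s ≤ IsingEk G c J k s')
      ↔ ∀ T : Finset (Fin n), fval G c k J T ≤ fval G c k J S := by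
    constructor
    · intro hmin T
      set s' : Fin n → ℝ := fun i => if i ∈ T then 1 else -1 with hs'def
      have hs' : ∀ i, s' i = -1 ∨ s' i = 1 := by
        intro i; by_cases h : i ∈ T <;> simp [hs'def, h]
      have hT : (Finset.univ.filter fun i => s' i = 1) = T := by
        ext i
        by_cases h : i ∈ T <;> simp [hs'def, h] <;> norm_num
      have h := hmin s' hs'
      rw [energy_eq G c J k hk0 s hs, energy_eq G c J k hk0 s' hs', hT] at h
      have h2 : (4 / k) * fval G c k J T ≤ (4 / k) * fval G c k J S := by linarith
      exact le_of_mul_le_mul_left h2 hpos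
    · intro hmax s' hs'
      rw [energy_eq G c J k hk0 s hs, energy_eq G c J k hk0 s' hs']
      have h2 := mul_le_mul_of_nonneg_left
        (hmax (Finset.univ.filter fun i => s' i = 1)) (le_of_lt hpos)
      linarith
  rw [step1]
  constructor
  · intro hmax
    have hind : IsIndep G S := by
      by_contra h
      obtain ⟨i, hi, hlt⟩ := improve G c J k hk hJ hcond h
      exact absurd (hmax (S.erase i)) (not_le.mpr hlt)
    refine ⟨hind, fun T hT => ?_⟩
    have h := hmax T
    rwa [fval_indep G c k J hT, fval_indep G c k J hind] at h
  · rintro ⟨hind, hmax⟩ T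
    obtain ⟨T', hT', hle⟩ := exists_indep_ge G c J k hk hJ hcond T
    calc fval G c k J T ≤ ∑ i ∈ T', c i := hle
      _ ≤ ∑ i ∈ S, c i := hmax T' hT'
      _ = fval G c k J S := (fval_indep G c k J hind).symm

theorem stmt6 {n : ℕ} (G : SimpleGraph (Fin n)) [DecidableRel G.Adj]
    (c : Fin n → ℝ) (J : ℝ)
    (hc : ∀ i, 0 < c i) (hJ : 0 < J) :
    (∀ k : ℝ, 0 < k → (∀ i j, G.Adj i j → min (c i) (c j) < k * J) →
      ∀ s : Fin n → ℝ, (∀ i, s i = -1 ∨ s i = 1) →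
        ((∀ s' : Fin n → ℝ, (∀ i, s' i = -1 ∨ s' i = 1) →
            IsingEk G c J k s ≤ IsingEk G c J k s') ↔
         (IsIndep G (Finset.univ.filter (fun i => s i = 1)) ∧
          ∀ S : Finset (Fin n), IsIndep G S →
            ∑ i ∈ S, c i ≤ ∑ i ∈ Finset.univ.filter (fun i => s i = 1), c i))) ∧
    (∀ k₁ k₂ : ℝ, 0 < k₁ → 0 < k₂ →
      (∀ i j, G.Adj i j → min (c i) (c j) < k₁ * J) →
      (∀ i j, G.Adj i j → min (c i) (c j) < k₂ * J) →
      {s : Fin n → ℝ | (∀ i, s i = -1 ∨ s i = 1) ∧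
          ∀ s' : Fin n → ℝ, (∀ i, s' i = -1 ∨ s' i = 1) →
            IsingEk G c J k₁ s ≤ IsingEk G c J k₁ s'} =
      {s : Fin n → ℝ | (∀ i, s i = -1 ∨ s i = 1) ∧
          ∀ s' : Fin n → ℝ, (∀ i, s' i = -1 ∨ s' i = 1) →
            IsingEk G c J k₂ s ≤ IsingEk G c J k₂ s'}) := by
  constructor
  · intro k hk hcond s hs
    exact main_iff G c J hJ k hk hcond s hs
  · intro k₁ k₂ hk₁ hk₂ hc₁ hc₂
    ext s
    simp only [Set.mem_setOf_eq]
    constructor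
    · rintro ⟨hpm, hmin⟩
      exact ⟨hpm, (main_iff G c J hJ k₂ hk₂ hc₂ s hpm).mpr
        ((main_iff G c J hJ k₁ hk₁ hc₁ s hpm).mp hmin)⟩
    · rintro ⟨hpm, hmin⟩
      exact ⟨hpm, (main_iff G c J hJ k₁ hk₁ hc₁ s hpm).mpr
        ((main_iff G c J hJ k₂ hk₂ hc₂ s hpm).mp hmin)⟩
end

section
/- In the CK graph CK(r, g) with g ≥ 2: for every function f : {1,…,g} → {1,…,r}, the set S_f consisting of the f(k)-th vertex of clique k of V_B for each k = 1,…,g is a maximal independent set of total weight g·w_B; moreover distinct functions f give distinct sets, so CK(r,g) has exactly r^g maximal independent sets of this form. -/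
open Finset

/-- Vertex type of the CK graph `CK(r,g)`: `V_A` = `g` groups of 2 vertices (left),
`V_B` = `g` cliques of `r` vertices (right). -/
abbrev CKV (r g : ℕ) := (Fin g × Fin 2) ⊕ (Fin g × Fin r)

/-- The CK graph `CK(r,g)`: no edges inside `V_A`; each `r`-clique of `V_B` is complete;
a vertex of group `k` of `V_A` is adjacent to every vertex of every clique of `V_B`
except clique `k`; no edges between distinct cliques of `V_B`. -/
def CKGraph (r g : ℕ) : SimpleGraph (CKV r g) where
  Adj u v :=
    match u, v with
    | Sum.inl _, Sum.inl _ => False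
    | Sum.inl a, Sum.inr b => a.1 ≠ b.1
    | Sum.inr a, Sum.inl b => b.1 ≠ a.1
    | Sum.inr a, Sum.inr b => a.1 = b.1 ∧ a.2 ≠ b.2
  symm := by
    constructor
    rintro (⟨k, a⟩ | ⟨k, a⟩) (⟨l, b⟩ | ⟨l, b⟩) h
    · exact h
    · exact h
    · exact h
    · exact ⟨h.1.symm, h.2.symm⟩
  loopless := by
    constructor
    rintro (⟨k, a⟩ | ⟨k, a⟩) h
    · exact h
    · exact h.2 rfl

/-- `S` is an independent set of `CK(r,g)`. -/
def CKIndep {r g : ℕ} (S : Finset (CKV r g)) : Prop :=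
  ∀ u ∈ S, ∀ v ∈ S, ¬ (CKGraph r g).Adj u v

/-- `S` is a maximal independent set of `CK(r,g)`. -/
def CKMaxIndep {r g : ℕ} (S : Finset (CKV r g)) : Prop :=
  CKIndep S ∧ ∀ v : CKV r g, CKIndep (insert v S) → v ∈ S

/-- The total weight of `S`, where `V_A`-vertices weigh `wA` and `V_B`-vertices weigh `wB`. -/
def CKwt {r g : ℕ} (wA wB : ℝ) (S : Finset (CKV r g)) : ℝ :=
  ∑ v ∈ S, Sum.elim (fun _ => wA) (fun _ => wB) v

/-- The set `V_A` of the CK graph, as a `Finset`. -/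
def VA (r g : ℕ) : Finset (CKV r g) :=
  (Finset.univ : Finset (Fin g × Fin 2)).image Sum.inl

/-- For `f : Fin g → Fin r`, the selection `S_f` consisting of the `f k`-th vertex of
clique `k` of `V_B`, for each `k`. -/
def Sf {r g : ℕ} (f : Fin g → Fin r) : Finset (CKV r g) :=
  (Finset.univ : Finset (Fin g)).image (fun k => Sum.inr (k, f k))

theorem stmt8 (r g : ℕ) (hr : 1 ≤ r) (hg : 2 ≤ g)
    (wA wB : ℝ) (hwA : 0 < wA) (hwB : 0 < wB) :
    (∀ f : Fin g → Fin r, CKMaxIndep (Sf f) ∧ CKwt wA wB (Sf f) = g * wB) ∧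
    (∀ f f' : Fin g → Fin r, Sf f = Sf f' → f = f') ∧
    ((Finset.univ : Finset (Fin g → Fin r)).image (fun f => (Sf f : Finset (CKV r g)))).card
      = r ^ g := by

  have hmem : ∀ (f : Fin g → Fin r) (v : CKV r g), v ∈ Sf f ↔
      ∃ k : Fin g, v = Sum.inr (k, f k) := by
    intro f v
    simp [Sf, eq_comm]
  have hSf : ∀ f f' : Fin g → Fin r, Sf f = Sf f' → f = f' := by
    intro f f' h
    funext k
    have : (Sum.inr (k, f k) : CKV r g) ∈ Sf f' := by
      rw [← h, hmem]; exact ⟨k, rfl⟩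
    rw [hmem] at this
    obtain ⟨k', hk'⟩ := this
    have h1 : k = k' := by simpa using congrArg (fun x => Sum.elim (fun _ => k) Prod.fst x) hk'
    subst h1
    simpa using congrArg (fun x => Sum.elim (fun _ => f k) Prod.snd x) hk'
  refine ⟨fun f => ⟨⟨?_, ?_⟩, ?_⟩, hSf, ?_⟩
  · intro u hu v hv hadj
    rw [hmem] at hu hv
    obtain ⟨k, rfl⟩ := hu
    obtain ⟨l, rfl⟩ := hv
    obtain ⟨h1, h2⟩ := hadj
    simp only at h1
    subst h1
    exact h2 rfl
  · rintro (⟨k, a⟩ | ⟨k, b⟩) hins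
    · exfalso
      have : Nontrivial (Fin g) := Fin.nontrivial_iff_two_le.mpr hg
      obtain ⟨k', hk'⟩ := exists_ne k
      have h1 : (Sum.inl (k, a) : CKV r g) ∈ insert (Sum.inl (k, a)) (Sf f) :=
        Finset.mem_insert_self _ _
      have h2 : (Sum.inr (k', f k') : CKV r g) ∈ insert (Sum.inl (k, a)) (Sf f) :=
        Finset.mem_insert_of_mem ((hmem f _).2 ⟨k', rfl⟩)
      exact hins _ h1 _ h2 hk'.symm
    · by_cases hb : b = f k
      · subst hb
        exact (hmem f _).2 ⟨k, rfl⟩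
      · exfalso
        have h1 : (Sum.inr (k, b) : CKV r g) ∈ insert (Sum.inr (k, b)) (Sf f) :=
          Finset.mem_insert_self _ _
        have h2 : (Sum.inr (k, f k) : CKV r g) ∈ insert (Sum.inr (k, b)) (Sf f) :=
          Finset.mem_insert_of_mem ((hmem f _).2 ⟨k, rfl⟩)
        exact hins _ h1 _ h2 ⟨rfl, hb⟩
  · have hinj : Function.Injective (fun k : Fin g => (Sum.inr (k, f k) : CKV r g)) := by
      intro a b hab
      simpa using congrArg (fun x => Sum.elim (fun _ => a) Prod.fst x) hab
    rw [CKwt, Sf, Finset.sum_image (fun a _ b _ h => hinj h)]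
    simp
  · rw [Finset.card_image_of_injective _ hSf]
    simp [Fintype.card_fun]
end

section
/- In the CK graph CK(r, g) with g ≥ 2, the maximal independent sets are exactly the following: (1) V_A; (2) for each function f : {1,…,g} → {1,…,r}, the set S_f consisting of the f(k)-th vertex of clique k of V_B for each k (r^g sets in total); and (3) for each k ∈ {1,…,g} and each vertex v of clique k of V_B, the set consisting of both vertices of group k of V_A together with v (g·r sets in total). -/
open Finset

lemma ckadj_ll {r g : ℕ} (a b : Fin g × Fin 2) :
    ¬ (CKGraph r g).Adj (Sum.inl a) (Sum.inl b) := fun h => h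

lemma ckadj_lr {r g : ℕ} (k l : Fin g) (a : Fin 2) (b : Fin r) :
    (CKGraph r g).Adj (Sum.inl (k, a)) (Sum.inr (l, b)) ↔ k ≠ l := Iff.rfl

lemma ckadj_rl {r g : ℕ} (k l : Fin g) (a : Fin r) (b : Fin 2) :
    (CKGraph r g).Adj (Sum.inr (k, a)) (Sum.inl (l, b)) ↔ l ≠ k := Iff.rfl

lemma ckadj_rr {r g : ℕ} (k l : Fin g) (a b : Fin r) :
    (CKGraph r g).Adj (Sum.inr (k, a)) (Sum.inr (l, b)) ↔ k = l ∧ a ≠ b := Iff.rfl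

lemma exists_ne_fin {g : ℕ} (hg : 2 ≤ g) (m : Fin g) : ∃ l : Fin g, l ≠ m := by
  have h0 : (0 : ℕ) < g := by omega
  have h1 : (1 : ℕ) < g := by omega
  by_cases hm : m = ⟨0, h0⟩
  · exact ⟨⟨1, h1⟩, by simp [hm, Fin.ext_iff]⟩
  · exact ⟨⟨0, h0⟩, fun h => hm h.symm⟩

theorem stmt9 (r g : ℕ) (hr : 1 ≤ r) (hg : 2 ≤ g) (S : Finset (CKV r g)) :
    CKMaxIndep S ↔
      S = VA r g ∨
      (∃ f : Fin g → Fin r, S = Sf f) ∨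
      (∃ (k : Fin g) (v : Fin r),
        S = {Sum.inl (k, 0), Sum.inl (k, 1), Sum.inr (k, v)}) := by
  constructor
  · rintro ⟨hI, hM⟩
    by_cases hB : ∃ k v, Sum.inr (k, v) ∈ S
    · obtain ⟨k, v, hkv⟩ := hB
      by_cases hA : ∃ l a, Sum.inl (l, a) ∈ S
      · -- case C : S = {inl (k,0), inl (k,1), inr (k,v)}
        obtain ⟨l, a, hla⟩ := hA
        have hlk : l = k := by
          have h := hI _ hla _ hkv
          rw [ckadj_lr] at h
          simpa using h
        subst hlk
        -- every inl in S has group l, every inr in S equals (l, v)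
        have hfl : ∀ m c, Sum.inl (m, c) ∈ S → m = l := by
          intro m c hmc
          have h := hI _ hmc _ hkv
          rw [ckadj_lr] at h
          simpa using h
        have hfr : ∀ m w, Sum.inr (m, w) ∈ S → m = l ∧ w = v := by
          intro m w hmw
          have h1 := hI _ hmw _ hla
          rw [ckadj_rl] at h1
          have hml : m = l := by
            by_contra hne
            exact h1 (fun h => hne h.symm)
          subst hml
          have h2 := hI _ hmw _ hkv
          rw [ckadj_rr] at h2
          push_neg at h2
          exact ⟨rfl, h2 rfl⟩
        have hin : ∀ c : Fin 2, Sum.inl (l, c) ∈ S := by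
          intro c
          apply hM
          intro u hu w hw hadj
          rcases Finset.mem_insert.mp hu with hu | hu <;>
          rcases Finset.mem_insert.mp hw with hw | hw
          · subst hu hw; exact (CKGraph r g).loopless.irrefl _ hadj
          · subst hu
            rcases w with ⟨m, c'⟩ | ⟨m, w'⟩
            · exact ckadj_ll _ _ hadj
            · rw [ckadj_lr] at hadj
              exact hadj ((hfr _ _ hw).1.symm)
          · subst hw
            rcases u with ⟨m, c'⟩ | ⟨m, w'⟩
            · exact ckadj_ll _ _ hadj
            · rw [ckadj_rl] at hadj
              exact hadj ((hfr _ _ hu).1.symm)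
          · exact hI _ hu _ hw hadj
        right; right
        refine ⟨l, v, ?_⟩
        ext x
        simp only [Finset.mem_insert, Finset.mem_singleton]
        constructor
        · intro hx
          rcases x with ⟨m, c⟩ | ⟨m, w⟩
          · have := hfl _ _ hx; subst this
            fin_cases c
            · left; rfl
            · right; left; rfl
          · obtain ⟨h1, h2⟩ := hfr _ _ hx
            subst h1; subst h2
            right; right; rfl
        · rintro (rfl | rfl | rfl)
          · exact hin 0
          · exact hin 1
          · exact hkv
      · -- case B : S = Sf f
        push_neg at hA
        have hex : ∀ m : Fin g, ∃ w, Sum.inr (m, w) ∈ S := by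
          intro m
          by_contra hno
          push_neg at hno
          have hmem : Sum.inr (m, (⟨0, hr⟩ : Fin r)) ∈ S := by
            apply hM
            intro u hu w hw hadj
            rcases Finset.mem_insert.mp hu with hu | hu <;>
            rcases Finset.mem_insert.mp hw with hw | hw
            · subst hu hw; exact (CKGraph r g).loopless.irrefl _ hadj
            · subst hu
              rcases w with ⟨m', c'⟩ | ⟨m', w'⟩
              · exact hA _ _ hw
              · rw [ckadj_rr] at hadj
                exact hno w' (by rw [hadj.1]; exact hw)
            · subst hw
              rcases u with ⟨m', c'⟩ | ⟨m', w'⟩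
              · exact hA _ _ hu
              · rw [ckadj_rr] at hadj
                exact hno w' (by rw [← hadj.1]; exact hu)
            · exact hI _ hu _ hw hadj
          exact hno _ hmem
        choose f hf using hex
        have huniq : ∀ m w, Sum.inr (m, w) ∈ S → w = f m := by
          intro m w hmw
          by_contra hne
          exact hI _ hmw _ (hf m) ((ckadj_rr _ _ _ _).mpr ⟨rfl, hne⟩)
        right; left
        refine ⟨f, ?_⟩
        ext x
        simp only [Sf, Finset.mem_image, Finset.mem_univ, true_and]
        constructor
        · intro hx
          rcases x with ⟨m, c⟩ | ⟨m, w⟩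
          · exact absurd hx (hA _ _)
          · exact ⟨m, by rw [huniq _ _ hx]⟩
        · rintro ⟨m, rfl⟩
          exact hf m
    · -- case A : S = VA
      push_neg at hB
      left
      have hall : ∀ m c, Sum.inl (m, c) ∈ S := by
        intro m c
        apply hM
        intro u hu w hw hadj
        rcases Finset.mem_insert.mp hu with hu | hu <;>
        rcases Finset.mem_insert.mp hw with hw | hw
        · subst hu hw; exact (CKGraph r g).loopless.irrefl _ hadj
        · subst hu
          rcases w with ⟨m', c'⟩ | ⟨m', w'⟩
          · exact ckadj_ll _ _ hadj
          · exact hB _ _ hw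
        · subst hw
          rcases u with ⟨m', c'⟩ | ⟨m', w'⟩
          · exact ckadj_ll _ _ hadj
          · exact hB _ _ hu
        · exact hI _ hu _ hw hadj
      ext x
      simp only [VA, Finset.mem_image, Finset.mem_univ, true_and]
      constructor
      · intro hx
        rcases x with ⟨m, c⟩ | ⟨m, w⟩
        · exact ⟨(m, c), rfl⟩
        · exact absurd hx (hB _ _)
      · rintro ⟨⟨m, c⟩, rfl⟩
        exact hall m c
  · rintro (rfl | ⟨f, rfl⟩ | ⟨k, v, rfl⟩)
    · -- VA is maximal independent
      constructor
      · intro u hu w hw hadj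
        simp only [VA, Finset.mem_image, Finset.mem_univ, true_and] at hu hw
        obtain ⟨a, rfl⟩ := hu
        obtain ⟨b, rfl⟩ := hw
        exact ckadj_ll _ _ hadj
      · intro x hx
        rcases x with ⟨m, c⟩ | ⟨m, w⟩
        · simp [VA]
        · exfalso
          obtain ⟨l, hl⟩ := exists_ne_fin hg m
          have hmem : (Sum.inl (l, 0) : CKV r g) ∈ insert (Sum.inr (m, w)) (VA r g) := by
            apply Finset.mem_insert_of_mem
            simp [VA]
          exact hx _ hmem _ (Finset.mem_insert_self _ _)
            ((ckadj_lr _ _ _ _).mpr hl)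
    · -- Sf f is maximal independent
      constructor
      · intro u hu w hw hadj
        simp only [Sf, Finset.mem_image, Finset.mem_univ, true_and] at hu hw
        obtain ⟨a, rfl⟩ := hu
        obtain ⟨b, rfl⟩ := hw
        rw [ckadj_rr] at hadj
        exact hadj.2 (by rw [hadj.1])
      · intro x hx
        rcases x with ⟨m, c⟩ | ⟨m, w⟩
        · exfalso
          obtain ⟨l, hl⟩ := exists_ne_fin hg m
          have hmem : (Sum.inr (l, f l) : CKV r g) ∈ insert (Sum.inl (m, c)) (Sf f) := by
            apply Finset.mem_insert_of_mem
            simp [Sf]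
          exact hx _ (Finset.mem_insert_self _ _) _ hmem
            ((ckadj_lr _ _ _ _).mpr (fun h => hl h.symm))
        · have hmem : (Sum.inr (m, f m) : CKV r g) ∈ insert (Sum.inr (m, w)) (Sf f) := by
            apply Finset.mem_insert_of_mem
            simp [Sf]
          have hw : w = f m := by
            by_contra hne
            exact hx _ (Finset.mem_insert_self _ _) _ hmem
              ((ckadj_rr _ _ _ _).mpr ⟨rfl, hne⟩)
          subst hw
          simp [Sf]
    · -- the triple set is maximal independent
      constructor
      · intro u hu w hw hadj
        simp only [Finset.mem_insert, Finset.mem_singleton] at hu hw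
        rcases hu with rfl | rfl | rfl <;> rcases hw with rfl | rfl | rfl <;>
          first
            | exact ckadj_ll _ _ hadj
            | (rw [ckadj_lr] at hadj; exact hadj rfl)
            | (rw [ckadj_rl] at hadj; exact hadj rfl)
            | (rw [ckadj_rr] at hadj; exact hadj.2 rfl)
      · intro x hx
        simp only [Finset.mem_insert, Finset.mem_singleton]
        have hmem0 : (Sum.inl (k, 0) : CKV r g) ∈
            insert x ({Sum.inl (k, 0), Sum.inl (k, 1), Sum.inr (k, v)} : Finset (CKV r g)) := by
          apply Finset.mem_insert_of_mem; simp
        have hmemv : (Sum.inr (k, v) : CKV r g) ∈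
            insert x ({Sum.inl (k, 0), Sum.inl (k, 1), Sum.inr (k, v)} : Finset (CKV r g)) := by
          apply Finset.mem_insert_of_mem; simp
        rcases x with ⟨m, c⟩ | ⟨m, w⟩
        · have hmk : m = k := by
            by_contra hne
            exact hx _ (Finset.mem_insert_self _ _) _ hmemv ((ckadj_lr _ _ _ _).mpr hne)
          subst hmk
          fin_cases c
          · left; rfl
          · right; left; rfl
        · have hmk : m = k := by
            by_contra hne
            exact hx _ (Finset.mem_insert_self _ _) _ hmem0
              ((ckadj_rl _ _ _ _).mpr (fun h => hne h.symm))
          subst hmk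
          have hwv : w = v := by
            by_contra hne
            exact hx _ (Finset.mem_insert_self _ _) _ hmemv ((ckadj_rr _ _ _ _).mpr ⟨rfl, hne⟩)
          subst hwv
          right; right; rfl
end
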